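/- Let a_n ≥ 0 satisfy a_{2l+d} ≤ α^l a_{l+d} + C b_l for d ∈ {0,1}, where b_l ≤ D r^l and a_n ≤ A for all n (with 0 < α, r < 1 and A, C, D > 0). Then there exist D₂ > 0 and 0 < β₁ < 1, with β₁ = max{√r, √α}, such that a_n ≤ D₂ β₁ⁿ for all n ≥ 1. -/

import Mathlib

/-- abstract form of Proposition 5.8: if `a (2l+d) ≤ α^l a (l+d) + C b l` for
`d ∈ {0,1}`, with `b l ≤ D r^l` and `a n ≤ A` uniformly, then `a n ≤ D₂ β₁ⁿ` for all `n ≥ 1`,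
where `β₁ = max {√r, √α}`. -/
theorem stmt15 (a b : ℕ → ℝ) (ha0 : ∀ n, 0 ≤ a n)
    (α r A C D : ℝ) (hα0 : 0 < α) (hα1 : α < 1) (hr0 : 0 < r) (hr1 : r < 1)
    (hA : 0 < A) (hC : 0 < C) (hD : 0 < D)
    (hrec : ∀ l d : ℕ, d ≤ 1 → a (2 * l + d) ≤ α ^ l * a (l + d) + C * b l)
    (hb : ∀ l, b l ≤ D * r ^ l) (hbd : ∀ n, a n ≤ A) :
    ∃ D₂ : ℝ, 0 < D₂ ∧ 0 < max (Real.sqrt r) (Real.sqrt α) ∧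
      max (Real.sqrt r) (Real.sqrt α) < 1 ∧
      ∀ n : ℕ, 1 ≤ n → a n ≤ D₂ * max (Real.sqrt r) (Real.sqrt α) ^ n := by
  set β := max (Real.sqrt r) (Real.sqrt α) with hβ
  have hsr : 0 < Real.sqrt r := Real.sqrt_pos.mpr hr0
  have hβ0 : 0 < β := lt_of_lt_of_le hsr (le_max_left _ _)
  have hβ1 : β < 1 := by
    apply max_lt
    · rw [show (1:ℝ) = Real.sqrt 1 by simp]
      exact Real.sqrt_lt_sqrt hr0.le hr1
    · rw [show (1:ℝ) = Real.sqrt 1 by simp]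
      exact Real.sqrt_lt_sqrt hα0.le hα1
  have hrβ : r ≤ β ^ 2 := by
    calc r = Real.sqrt r ^ 2 := (Real.sq_sqrt hr0.le).symm
    _ ≤ β ^ 2 := pow_le_pow_left₀ (Real.sqrt_nonneg r) (le_max_left _ _) 2
  have hαβ : α ≤ β ^ 2 := by
    calc α = Real.sqrt α ^ 2 := (Real.sq_sqrt hα0.le).symm
    _ ≤ β ^ 2 := pow_le_pow_left₀ (Real.sqrt_nonneg α) (le_max_right _ _) 2
  refine ⟨(A + C * D) / β, by positivity, hβ0, hβ1, fun n hn => ?_⟩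
  set l := n / 2 with hl
  set d := n % 2 with hd
  have hd1 : d ≤ 1 := Nat.lt_succ_iff.mp (Nat.mod_lt n (by norm_num))
  have hnld : 2 * l + d = n := Nat.div_add_mod n 2
  have key : a n ≤ (A + C * D) * β ^ (2 * l) := by
    rw [← hnld]
    calc a (2 * l + d) ≤ α ^ l * a (l + d) + C * b l := hrec l d hd1
    _ ≤ (β ^ 2) ^ l * A + C * (D * r ^ l) := by
        apply add_le_add
        · exact mul_le_mul (pow_le_pow_left₀ hα0.le hαβ l) (hbd _) (ha0 _) (by positivity)
        · exact mul_le_mul_of_nonneg_left (hb l) hC.le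
    _ ≤ (β ^ 2) ^ l * A + C * (D * (β ^ 2) ^ l) := by
        apply add_le_add_right
        apply mul_le_mul_of_nonneg_left _ hC.le
        exact mul_le_mul_of_nonneg_left (pow_le_pow_left₀ hr0.le hrβ l) hD.le
    _ = (A + C * D) * β ^ (2 * l) := by rw [pow_mul]; ring
  have h2l : n - 1 ≤ 2 * l := by omega
  calc a n ≤ (A + C * D) * β ^ (2 * l) := key
  _ ≤ (A + C * D) * β ^ (n - 1) :=
      mul_le_mul_of_nonneg_left (pow_le_pow_of_le_one hβ0.le hβ1.le h2l) (by positivity)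
  _ = (A + C * D) / β * β ^ n := by
      rw [div_mul_eq_mul_div, eq_div_iff hβ0.ne', mul_assoc, ← pow_succ,
        Nat.sub_add_cancel hn]
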